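/- Let A₁, A₂, α*, v₂, v₃, ω₂, ω₃ be positive real numbers and set a = −A₁(v₂ω₂ + v₃ω₃)(ω₂ + ω₃) + (A₂/α*)(v₂ + v₃)ω₂ω₃. If α* > A₂/A₁, then a < 0; in particular, the backward-bifurcation condition a > 0 cannot hold when α* > A₂/A₁. -/
import Mathlib

/-- If `α* > A₂/A₁`, then the bifurcation coefficient
`a = −A₁(v₂ω₂ + v₃ω₃)(ω₂ + ω₃) + (A₂/α*)(v₂ + v₃)ω₂ω₃` is negative; in particular
the backward-bifurcation condition `a > 0` cannot hold. -/
theorem no_backward_bifurcation_above_ratio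
    (A₁ A₂ αstar v₂ v₃ ω₂ ω₃ : ℝ)
    (hA₁ : 0 < A₁) (hA₂ : 0 < A₂) (hαstar : 0 < αstar)
    (hv₂ : 0 < v₂) (hv₃ : 0 < v₃) (hω₂ : 0 < ω₂) (hω₃ : 0 < ω₃)
    (a : ℝ)
    (ha : a = -A₁ * ((v₂ * ω₂ + v₃ * ω₃) * (ω₂ + ω₃)) +
        A₂ / αstar * ((v₂ + v₃) * (ω₂ * ω₃)))
    (hgt : A₂ / A₁ < αstar) :
    a < 0 ∧ ¬ (0 < a) := by
  have hlt : A₂ / αstar < A₁ := by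
    rw [div_lt_iff₀ hαstar]
    rw [div_lt_iff₀ hA₁] at hgt
    linarith
  have h0 : 0 < A₂ / αstar := div_pos hA₂ hαstar
  have hX : (v₂ + v₃) * (ω₂ * ω₃) < (v₂ * ω₂ + v₃ * ω₃) * (ω₂ + ω₃) := by
    nlinarith [mul_pos hv₂ (mul_pos hω₂ hω₂), mul_pos hv₃ (mul_pos hω₃ hω₃)]
  have haneg : a < 0 := by
    have hY : 0 < (v₂ + v₃) * (ω₂ * ω₃) := by positivity
    have h1 := mul_lt_mul_of_pos_right hlt hY
    have h2 := mul_lt_mul_of_pos_left hX hA₁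
    rw [ha]; linarith
  exact ⟨haneg, not_lt.2 haneg.le⟩
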